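/- Let G be a finite simple graph with no isolated vertex. If G has a unique minimum paired-dominating set, then for every minimum ev-dominating set M of G, no two distinct edges of M share a vertex. -/

import Mathlib

open SimpleGraph

variable {V : Type*}

/-- `D` is a dominating set of `G`: every vertex outside `D` has a neighbor in `D`. -/
def IsDomSet (G : SimpleGraph V) (D : Set V) : Prop :=
  ∀ v ∉ D, ∃ u ∈ D, G.Adj u v

/-- The edge `e` ev-dominates the vertex `v`: `e` is incident to `v` or to a neighbor of `v`. -/
def EvDom (G : SimpleGraph V) (e : Sym2 V) (v : V) : Prop :=
  v ∈ e ∨ ∃ u ∈ e, G.Adj u v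

/-- `M` is an edge-vertex dominating set of `G`. -/
def IsEvDomSet (G : SimpleGraph V) (M : Set (Sym2 V)) : Prop :=
  M ⊆ G.edgeSet ∧ ∀ v : V, ∃ e ∈ M, EvDom G e v

/-- `M` is a minimum edge-vertex dominating set of `G`. -/
def IsMinEvDomSet (G : SimpleGraph V) (M : Set (Sym2 V)) : Prop :=
  IsEvDomSet G M ∧ ∀ M' : Set (Sym2 V), IsEvDomSet G M' → M.ncard ≤ M'.ncard

/-- The edge-vertex domination number `γ_ev(G)`. -/
noncomputable def evNum (G : SimpleGraph V) : ℕ :=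
  sInf {n | ∃ M : Set (Sym2 V), IsEvDomSet G M ∧ M.ncard = n}

/-- The set of all endpoints of edges in `M`. -/
def edgeVerts (M : Set (Sym2 V)) : Set V := {v | ∃ e ∈ M, v ∈ e}

/-- `M` is a perfect matching of the induced subgraph `G[D]`: a set of edges of `G`
with all endpoints in `D`, such that every vertex of `D` lies in exactly one edge of `M`. -/
def IsPMOn (G : SimpleGraph V) (D : Set V) (M : Set (Sym2 V)) : Prop :=
  M ⊆ G.edgeSet ∧ (∀ e ∈ M, ∀ v ∈ e, v ∈ D) ∧ ∀ v ∈ D, ∃! e, e ∈ M ∧ v ∈ e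

/-- `D` is a paired-dominating set of `G`. -/
def IsPairedDomSet (G : SimpleGraph V) (D : Set V) : Prop :=
  IsDomSet G D ∧ ∃ M : Set (Sym2 V), IsPMOn G D M

/-- `D` is a minimum paired-dominating set of `G`. -/
def IsMinPairedDomSet (G : SimpleGraph V) (D : Set V) : Prop :=
  IsPairedDomSet G D ∧ ∀ D' : Set V, IsPairedDomSet G D' → D.ncard ≤ D'.ncard

/-- The paired-domination number `γ_pr(G)`. -/
noncomputable def prNum (G : SimpleGraph V) : ℕ :=
  sInf {n | ∃ D : Set V, IsPairedDomSet G D ∧ D.ncard = n}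

/-- No two distinct edges of `M` share a vertex. -/
def NoSharedVertex (M : Set (Sym2 V)) : Prop :=
  ∀ e ∈ M, ∀ f ∈ M, e ≠ f → ∀ v : V, v ∈ e → v ∉ f

/-- `G` has no isolated vertex. -/
def NoIsolated (G : SimpleGraph V) : Prop := ∀ v : V, ∃ u, G.Adj u v


/-! ### Auxiliary material -/

lemma edgeVerts_insert' (e : Sym2 V) (Q : Set (Sym2 V)) :
    edgeVerts (insert e Q) = {x | x ∈ e} ∪ edgeVerts Q := by
  ext x; simp [edgeVerts]

lemma ncard_edgeVerts_le [Fintype V] (Q : Set (Sym2 V)) (hQ : Q.Finite) :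
    (edgeVerts Q).ncard ≤ 2 * Q.ncard := by
  refine Set.Finite.induction_on (motive := fun Q _ => (edgeVerts Q).ncard ≤ 2 * Q.ncard) Q hQ (by simp [edgeVerts]) ?_
  rintro e Q he hQ ih
  rw [edgeVerts_insert', Set.ncard_insert_of_notMem he hQ]
  calc ({x | x ∈ e} ∪ edgeVerts Q).ncard ≤ {x | x ∈ e}.ncard + (edgeVerts Q).ncard :=
        Set.ncard_union_le _ _
    _ ≤ 2 + 2 * Q.ncard := by
        refine Nat.add_le_add ?_ ih
        induction e using Sym2.ind with | _ a b =>
          have : {x | x ∈ s(a,b)} = {a, b} := by ext x; simp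
          rw [this]
          exact le_trans (Set.ncard_insert_le _ _) (by simp)
    _ = 2 * (Q.ncard + 1) := by ring

lemma two_mul_ncard_le_edgeVerts [Fintype V] (Q : Set (Sym2 V)) (hQ : Q.Finite) :
    (∀ e ∈ Q, ¬ e.IsDiag) →
    (∀ e ∈ Q, ∀ f ∈ Q, e ≠ f → ∀ x, x ∈ e → x ∉ f) →
    2 * Q.ncard ≤ (edgeVerts Q).ncard := by
  refine Set.Finite.induction_on (motive := fun Q _ => (∀ e ∈ Q, ¬ e.IsDiag) → (∀ e ∈ Q, ∀ f ∈ Q, e ≠ f → ∀ x, x ∈ e → x ∉ f) → 2 * Q.ncard ≤ (edgeVerts Q).ncard) Q hQ (by simp [edgeVerts]) ?_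
  rintro e Q he hQ ih hnd hdisj
  rw [edgeVerts_insert', Set.ncard_insert_of_notMem he hQ]
  induction e using Sym2.ind with | _ a b =>
  have hab : a ≠ b := by
    intro h; exact hnd _ (Set.mem_insert _ _) (by simp [h, Sym2.isDiag_iff_proj_eq])
  have hset : {x | x ∈ s(a,b)} = {a, b} := by ext x; simp
  have hdisj2 : Disjoint ({a, b} : Set V) (edgeVerts Q) := by
    rw [Set.disjoint_left]
    rintro x hx ⟨f, hf, hxf⟩
    have hne : s(a,b) ≠ f := by rintro rfl; exact he hf
    refine hdisj _ (Set.mem_insert _ _) f (Set.mem_insert_of_mem _ hf) hne x ?_ hxf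
    simpa using hx
  rw [hset, Set.ncard_union_eq hdisj2 (Set.toFinite _) (Set.toFinite _)]
  have h2 : ({a, b} : Set V).ncard = 2 := by
    rw [Set.ncard_insert_of_notMem (by simpa using hab) (Set.toFinite _), Set.ncard_singleton]
  have ihh : 2 * Q.ncard ≤ (edgeVerts Q).ncard := by
    refine ih (fun f hf => hnd f (Set.mem_insert_of_mem _ hf))
      (fun f hf g hg hne => hdisj f (Set.mem_insert_of_mem _ hf) g (Set.mem_insert_of_mem _ hg) hne)
  omega

/-- `x` is a shared vertex of `M`: it lies on two distinct edges of `M`. -/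
def Sh (M : Set (Sym2 V)) (x : V) : Prop :=
  ∃ g ∈ M, ∃ g' ∈ M, g ≠ g' ∧ x ∈ g ∧ x ∈ g'

/-- `g` is an edge of `M` having a shared endpoint. -/
def Elig (M : Set (Sym2 V)) (g : Sym2 V) : Prop :=
  g ∈ M ∧ ∃ x, Sh M x ∧ x ∈ g

lemma sh_other {M : Set (Sym2 V)} {x : V} (hx : Sh M x) (g : Sym2 V) :
    ∃ g' ∈ M, g' ≠ g ∧ x ∈ g' := by
  obtain ⟨g1, hg1, g2, hg2, hne, hx1, hx2⟩ := hx
  by_cases h : g1 = g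
  · exact ⟨g2, hg2, by rw [← h]; exact hne.symm, hx2⟩
  · exact ⟨g1, hg1, h, hx1⟩

section Construction

variable [Fintype V] {G : SimpleGraph V} {M : Set (Sym2 V)}
variable {p cV wV : Sym2 V → V}

/-- Structure of eligible edges: decomposition into a shared endpoint `cV g`,
a non-shared endpoint `wV g`, with the private vertex `p g` adjacent to `wV g`
and outside `edgeVerts M`. -/
def GoodDecomp (G : SimpleGraph V) (M : Set (Sym2 V)) (p cV wV : Sym2 V → V) : Prop :=
  ∀ g, Elig M g → g = s(cV g, wV g) ∧ Sh M (cV g) ∧ ¬ Sh M (wV g) ∧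
    G.Adj (wV g) (p g) ∧ p g ∉ edgeVerts M

lemma shared_eq_cV (hA : GoodDecomp G M p cV wV) {g : Sym2 V} (hg : Elig M g)
    {x : V} (hx : x ∈ g) (hsx : Sh M x) : x = cV g := by
  obtain ⟨hdec, -, hw, -, -⟩ := hA g hg
  rw [hdec, Sym2.mem_iff] at hx
  rcases hx with rfl | rfl
  · rfl
  · exact absurd hsx hw

lemma p_inj (hp1 : ∀ g ∈ M, EvDom G g (p g))
    (hp2 : ∀ g ∈ M, ∀ g' ∈ M, g' ≠ g → ¬ EvDom G g' (p g))
    {g g' : Sym2 V} (hg : g ∈ M) (hg' : g' ∈ M) (hpp : p g = p g') : g = g' := by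
  by_contra hne
  exact hp2 g hg g' hg' (Ne.symm hne) (hpp ▸ hp1 g' hg')

lemma unshared_unique {x : V} (hx : ¬ Sh M x) {g g' : Sym2 V} (hg : g ∈ M)
    (hg' : g' ∈ M) (hxg : x ∈ g) (hxg' : x ∈ g') : g = g' := by
  by_contra hne
  exact hx ⟨g, hg, g', hg', hne, hxg, hxg'⟩

lemma construction (hME : M ⊆ G.edgeSet) (hMdom : ∀ v : V, ∃ e ∈ M, EvDom G e v)
    (hp1 : ∀ g ∈ M, EvDom G g (p g))
    (hp2 : ∀ g ∈ M, ∀ g' ∈ M, g' ≠ g → ¬ EvDom G g' (p g))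
    (hA : GoodDecomp G M p cV wV)
    (χ : V → Sym2 V) (hχ : ∀ c, Sh M c → χ c ∈ M ∧ c ∈ χ c) :
    IsPairedDomSet G (edgeVerts M ∪ p '' {g | Elig M g ∧ g ≠ χ (cV g)}) ∧
    (edgeVerts M ∪ p '' {g | Elig M g ∧ g ≠ χ (cV g)}).ncard ≤ 2 * M.ncard := by
  set B : Set (Sym2 V) := {g | Elig M g ∧ g ≠ χ (cV g)} with hBdef
  set P' : Set (Sym2 V) := (M \ B) ∪ (fun g => s(wV g, p g)) '' B with hP'def
  set D' : Set V := edgeVerts M ∪ p '' B with hD'def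
  have hBM : B ⊆ M := fun g hg => hg.1.1
  have hBelig : ∀ g ∈ B, Elig M g := fun g hg => hg.1
  have hχnotB : ∀ c, Sh M c → χ c ∉ B := by
    intro c hc hmem
    have helig : Elig M (χ c) := ⟨(hχ c hc).1, c, hc, (hχ c hc).2⟩
    have hceq : c = cV (χ c) := shared_eq_cV hA helig (hχ c hc).2 hc
    exact hmem.2 (by rw [← hceq])
  have hwin : ∀ g, Elig M g → wV g ∈ g ∧ cV g ∈ g := by
    intro g hg
    obtain ⟨hdec, -, -, -, -⟩ := hA g hg
    constructor
    · have h := Sym2.mem_mk_right (cV g) (wV g)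
      rwa [← hdec] at h
    · have h := Sym2.mem_mk_left (cV g) (wV g)
      rwa [← hdec] at h
  -- every vertex of D' is covered by an edge of P'
  have hcover : ∀ x ∈ D', ∃ h' ∈ P', x ∈ h' := by
    rintro x (⟨g, hgM, hxg⟩ | ⟨g, hgB, rfl⟩)
    · by_cases hx : Sh M x
      · exact ⟨χ x, Or.inl ⟨(hχ x hx).1, hχnotB x hx⟩, (hχ x hx).2⟩
      · by_cases hgB : g ∈ B
        · have helig : Elig M g := hBelig g hgB
          obtain ⟨hdec, hcsh, -, -, -⟩ := hA g helig
          have hxw : x = wV g := by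
            rw [hdec, Sym2.mem_iff] at hxg
            rcases hxg with rfl | rfl
            · exact absurd hcsh hx
            · rfl
          exact ⟨s(wV g, p g), Or.inr ⟨g, hgB, rfl⟩, by rw [hxw]; simp⟩
        · exact ⟨g, Or.inl ⟨hgM, hgB⟩, hxg⟩
    · exact ⟨s(wV g, p g), Or.inr ⟨g, hgB, rfl⟩, by simp⟩
  -- edges of P' are pairwise vertex-disjoint
  have hpw : ∀ h1 ∈ P', ∀ h2 ∈ P', ∀ x : V, x ∈ h1 → x ∈ h2 → h1 = h2 := by
    have key : ∀ h1 ∈ M \ B, ∀ g2 ∈ B, ∀ x : V, x ∈ h1 → x ∈ s(wV g2, p g2) → False := by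
      intro h1 hh1 g2 hg2 x hx1 hx2
      have helig2 : Elig M g2 := hBelig g2 hg2
      rw [Sym2.mem_iff] at hx2
      rcases hx2 with rfl | rfl
      · -- x = wV g2, a non-shared vertex on both h1 and g2
        obtain ⟨-, -, hw2, -, -⟩ := hA g2 helig2
        have : h1 = g2 := unshared_unique hw2 hh1.1 (hBM hg2) hx1 (hwin g2 helig2).1
        exact hh1.2 (this ▸ hg2)
      · -- x = p g2 lies on an edge of M, contradiction
        obtain ⟨-, -, -, -, hpev⟩ := hA g2 helig2
        exact hpev ⟨h1, hh1.1, hx1⟩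
    rintro h1 (hh1 | ⟨g1, hg1, rfl⟩) h2 (hh2 | ⟨g2, hg2, rfl⟩) x hx1 hx2
    · by_cases hne : h1 = h2
      · exact hne
      · have hsh : Sh M x := ⟨h1, hh1.1, h2, hh2.1, hne, hx1, hx2⟩
        have he1 : Elig M h1 := ⟨hh1.1, x, hsh, hx1⟩
        have he2 : Elig M h2 := ⟨hh2.1, x, hsh, hx2⟩
        have hc1 : x = cV h1 := shared_eq_cV hA he1 hx1 hsh
        have hc2 : x = cV h2 := shared_eq_cV hA he2 hx2 hsh
        have h1eq : h1 = χ x := by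
          by_contra hne1
          exact hh1.2 ⟨he1, by rw [← hc1]; exact hne1⟩
        have h2eq : h2 = χ x := by
          by_contra hne2
          exact hh2.2 ⟨he2, by rw [← hc2]; exact hne2⟩
        rw [h1eq, h2eq]
    · exact absurd (key h1 hh1 g2 hg2 x hx1 hx2) (by simp)
    · exact absurd (key h2 hh2 g1 hg1 x hx2 hx1) (by simp)
    · -- both replacement edges
      have he1 : Elig M g1 := hBelig g1 hg1
      have he2 : Elig M g2 := hBelig g2 hg2
      rw [Sym2.mem_iff] at hx1 hx2
      obtain ⟨-, -, hw1, -, hpev1⟩ := hA g1 he1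
      obtain ⟨-, -, hw2, -, hpev2⟩ := hA g2 he2
      rcases hx1 with rfl | rfl <;> rcases hx2 with heq | heq
      · have : g1 = g2 := unshared_unique hw1 (hBM hg1) (hBM hg2)
          (hwin g1 he1).1 (heq ▸ (hwin g2 he2).1)
        rw [this]
      · exact absurd ⟨g1, hBM hg1, (hwin g1 he1).1⟩ (heq ▸ hpev2)
      · exact absurd ⟨g2, hBM hg2, heq ▸ (hwin g2 he2).1⟩ hpev1
      · have : g1 = g2 := p_inj hp1 hp2 (hBM hg1) (hBM hg2) heq
        rw [this]
  have hpds : IsPairedDomSet G D' := by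
    constructor
    · -- dominating
      intro v hv
      obtain ⟨g, hgM, hev⟩ := hMdom v
      rcases hev with hvg | ⟨u, hug, hadj⟩
      · exact absurd (Or.inl ⟨g, hgM, hvg⟩) hv
      · exact ⟨u, Or.inl ⟨g, hgM, hug⟩, hadj⟩
    · refine ⟨P', ?_, ?_, ?_⟩
      · rintro e (he | ⟨g, hgB, rfl⟩)
        · exact hME he.1
        · show s(wV g, p g) ∈ G.edgeSet
          exact (hA g (hBelig g hgB)).2.2.2.1
      · rintro e (he | ⟨g, hgB, rfl⟩) v hv
        · exact Or.inl ⟨e, he.1, hv⟩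
        · rw [Sym2.mem_iff] at hv
          rcases hv with rfl | rfl
          · exact Or.inl ⟨g, hBM hgB, (hwin g (hBelig g hgB)).1⟩
          · exact Or.inr ⟨g, hgB, rfl⟩
      · intro v hv
        obtain ⟨h', hh', hvh'⟩ := hcover v hv
        exact ⟨h', ⟨hh', hvh'⟩, fun y hy => hpw y hy.1 h' hh' v hy.2 hvh'⟩
  refine ⟨hpds, ?_⟩
  have hsub : D' ⊆ edgeVerts P' := fun x hx => hcover x hx
  calc D'.ncard ≤ (edgeVerts P').ncard := Set.ncard_le_ncard hsub (Set.toFinite _)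
    _ ≤ 2 * P'.ncard := ncard_edgeVerts_le _ (Set.toFinite _)
    _ ≤ 2 * M.ncard := by
        have h1 : P'.ncard ≤ (M \ B).ncard + B.ncard := by
          refine le_trans (Set.ncard_union_le _ _) ?_
          exact Nat.add_le_add_left (Set.ncard_image_le (Set.toFinite _)) _
        have h2 : (M \ B).ncard + B.ncard = M.ncard :=
          Set.ncard_diff_add_ncard_of_subset hBM (Set.toFinite _)
        omega

end Construction

lemma edge_decomp {G : SimpleGraph V} {g : Sym2 V} (hg : g ∈ G.edgeSet) :
    ∃ a b, G.Adj a b ∧ g = s(a, b) := by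
  induction g using Sym2.ind with | _ a b => exact ⟨a, b, hg, rfl⟩

theorem stmt6 [Fintype V] (G : SimpleGraph V) (hG : NoIsolated G)
    (h : ∃! D : Set V, IsMinPairedDomSet G D) :
    ∀ M : Set (Sym2 V), IsMinEvDomSet G M → NoSharedVertex M := by
  classical
  obtain ⟨D, ⟨⟨hDdom, P, hP⟩, hDmin⟩, hDuniq⟩ := h
  intro M hM
  obtain ⟨⟨hME, hMdom⟩, hMmin⟩ := hM
  by_contra hns
  unfold NoSharedVertex at hns
  push_neg at hns
  obtain ⟨e, heM, f, hfM, hef, v, hve, hvf⟩ := hns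
  have hShv : Sh M v := ⟨e, heM, f, hfM, hef, hve, hvf⟩
  -- the matching of the unique minimum PDS is an ev-dominating set
  have hPev : IsEvDomSet G P := by
    refine ⟨hP.1, fun u => ?_⟩
    by_cases hu : u ∈ D
    · obtain ⟨g, ⟨hgP, hug⟩, -⟩ := hP.2.2 u hu
      exact ⟨g, hgP, Or.inl hug⟩
    · obtain ⟨w, hwD, hadj⟩ := hDdom u hu
      obtain ⟨g, ⟨hgP, hwg⟩, -⟩ := hP.2.2 w hwD
      exact ⟨g, hgP, Or.inr ⟨w, hwg, hadj⟩⟩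
  have hMP : M.ncard ≤ P.ncard := hMmin P hPev
  -- 2 * |P| ≤ |D|
  have hPdisj : ∀ a ∈ P, ∀ b ∈ P, a ≠ b → ∀ x : V, x ∈ a → x ∉ b := by
    intro a ha b hb hne x hxa hxb
    have hxD : x ∈ D := hP.2.1 a ha x hxa
    obtain ⟨g, -, hgu⟩ := hP.2.2 x hxD
    exact hne ((hgu a ⟨ha, hxa⟩).trans (hgu b ⟨hb, hxb⟩).symm)
  have hPnd : ∀ a ∈ P, ¬ a.IsDiag := fun a ha => G.not_isDiag_of_mem_edgeSet (hP.1 ha)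
  have h2P : 2 * P.ncard ≤ D.ncard := by
    refine le_trans (two_mul_ncard_le_edgeVerts P (Set.toFinite _) hPnd hPdisj) ?_
    refine Set.ncard_le_ncard ?_ (Set.toFinite _)
    rintro x ⟨g, hgP, hxg⟩
    exact hP.2.1 g hgP x hxg
  -- private vertices for edges of M
  have hpriv : ∀ g ∈ M, ∃ q : V, EvDom G g q ∧ ∀ g' ∈ M, g' ≠ g → ¬ EvDom G g' q := by
    intro g hg
    by_contra hcon
    push_neg at hcon
    have hev : IsEvDomSet G (M \ {g}) := by
      refine ⟨fun x hx => hME hx.1, fun u => ?_⟩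
      obtain ⟨g'', hg'', hevu⟩ := hMdom u
      by_cases hgg : g'' = g
      · obtain ⟨g', hg', hne, hev'⟩ := hcon u (hgg ▸ hevu)
        exact ⟨g', ⟨hg', hne⟩, hev'⟩
      · exact ⟨g'', ⟨hg'', hgg⟩, hevu⟩
    have h1 := hMmin _ hev
    have hlt := Set.ncard_diff_singleton_lt_of_mem hg (Set.toFinite M)
    omega
  have hpriv' : ∀ g : Sym2 V, ∃ q : V,
      g ∈ M → EvDom G g q ∧ ∀ g' ∈ M, g' ≠ g → ¬ EvDom G g' q := by
    intro g
    by_cases hg : g ∈ M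
    · obtain ⟨q, hq⟩ := hpriv g hg
      exact ⟨q, fun _ => hq⟩
    · exact ⟨v, fun h => absurd h hg⟩
  choose p hp using hpriv'
  have hp1 : ∀ g ∈ M, EvDom G g (p g) := fun g hg => (hp g hg).1
  have hp2 : ∀ g ∈ M, ∀ g' ∈ M, g' ≠ g → ¬ EvDom G g' (p g) := fun g hg => (hp g hg).2
  -- structure of eligible edges
  have main : ∀ a b : V, G.Adj a b → s(a, b) ∈ M → Sh M a →
      ¬ Sh M b ∧ G.Adj b (p s(a, b)) ∧ p s(a, b) ∉ edgeVerts M := by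
    intro a b hadj hgM hsha
    obtain ⟨g1, hg1M, hg1ne, hag1⟩ := sh_other hsha s(a, b)
    have hnEv1 : ¬ EvDom G g1 (p s(a, b)) := hp2 _ hgM g1 hg1M hg1ne
    have hpa : p s(a, b) ≠ a := by
      rintro hpa
      exact hnEv1 (Or.inl (by rw [hpa]; exact hag1))
    have hpna : ¬ G.Adj a (p s(a, b)) := by
      intro hpadj; exact hnEv1 (Or.inr ⟨a, hag1, hpadj⟩)
    have hpb : G.Adj b (p s(a, b)) := by
      have hev := hp1 _ hgM
      rcases hev with hmem | ⟨u, hu, huadj⟩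
      · rw [Sym2.mem_iff] at hmem
        rcases hmem with hpa' | hpb'
        · exact absurd hpa' hpa
        · exact absurd (Or.inr ⟨a, hag1, by rw [hpb']; exact hadj⟩) hnEv1
      · rw [Sym2.mem_iff] at hu
        rcases hu with rfl | rfl
        · exact absurd huadj hpna
        · exact huadj
    refine ⟨?_, hpb, ?_⟩
    · rintro hshb
      obtain ⟨g2, hg2M, hg2ne, hbg2⟩ := sh_other hshb s(a, b)
      exact hp2 _ hgM g2 hg2M hg2ne (Or.inr ⟨b, hbg2, hpb⟩)
    · rintro ⟨g'', hg''M, hpg''⟩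
      by_cases hgg : g'' = s(a, b)
      · subst hgg
        rw [Sym2.mem_iff] at hpg''
        rcases hpg'' with hpa' | hpb'
        · exact hpa hpa'
        · exact G.irrefl (hpb' ▸ hpb)
      · exact hp2 _ hgM g'' hg''M hgg (Or.inl hpg'')
  have heligstruct : ∀ g, Elig M g → ∃ c w : V, g = s(c, w) ∧ Sh M c ∧ ¬ Sh M w ∧
      G.Adj w (p g) ∧ p g ∉ edgeVerts M := by
    intro g hg
    obtain ⟨hgM, x, hshx, hxg⟩ := hg
    obtain ⟨a, b, hadj, rfl⟩ := edge_decomp (hME hgM)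
    rw [Sym2.mem_iff] at hxg
    rcases hxg with rfl | rfl
    · obtain ⟨h1, h2, h3⟩ := main x b hadj hgM hshx
      exact ⟨x, b, rfl, hshx, h1, h2, h3⟩
    · have hswap : s(a, x) = s(x, a) := Sym2.eq_swap
      rw [hswap] at hgM ⊢
      obtain ⟨h1, h2, h3⟩ := main x a hadj.symm hgM hshx
      exact ⟨x, a, rfl, hshx, h1, h2, h3⟩
  have heligstruct' : ∀ g, ∃ c w : V, Elig M g → g = s(c, w) ∧ Sh M c ∧ ¬ Sh M w ∧
      G.Adj w (p g) ∧ p g ∉ edgeVerts M := by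
    intro g
    by_cases hg : Elig M g
    · obtain ⟨c, w, hcw⟩ := heligstruct g hg
      exact ⟨c, w, fun _ => hcw⟩
    · exact ⟨v, v, fun h => absurd h hg⟩
  choose cV wV hA using heligstruct'
  have hGD : GoodDecomp G M p cV wV := fun g hg => hA g hg
  -- two choice functions, differing at `v`
  have hχexists : ∀ c : V, ∃ g : Sym2 V, Sh M c → g ∈ M ∧ c ∈ g := by
    intro c
    by_cases hc : Sh M c
    · obtain ⟨g1, hg1M, -, -, -, hcg1, -⟩ := hc
      exact ⟨g1, fun _ => ⟨hg1M, hcg1⟩⟩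
    · exact ⟨e, fun h => absurd h hc⟩
  choose χ₀ hχ₀ using hχexists
  set χ₁ : V → Sym2 V := Function.update χ₀ v e with hχ₁def
  set χ₂ : V → Sym2 V := Function.update χ₀ v f with hχ₂def
  have hχ₁ : ∀ c, Sh M c → χ₁ c ∈ M ∧ c ∈ χ₁ c := by
    intro c hc
    by_cases hcv : c = v
    · subst hcv
      rw [hχ₁def, Function.update_self]
      exact ⟨heM, hve⟩
    · rw [hχ₁def, Function.update_of_ne hcv]
      exact hχ₀ c hc
  have hχ₂ : ∀ c, Sh M c → χ₂ c ∈ M ∧ c ∈ χ₂ c := by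
    intro c hc
    by_cases hcv : c = v
    · subst hcv
      rw [hχ₂def, Function.update_self]
      exact ⟨hfM, hvf⟩
    · rw [hχ₂def, Function.update_of_ne hcv]
      exact hχ₀ c hc
  obtain ⟨hpds1, hcard1⟩ := construction hME hMdom hp1 hp2 hGD χ₁ hχ₁
  obtain ⟨hpds2, hcard2⟩ := construction hME hMdom hp1 hp2 hGD χ₂ hχ₂
  have hcard : 2 * M.ncard ≤ D.ncard := le_trans (by omega) h2P
  have hmin1 : IsMinPairedDomSet G (edgeVerts M ∪ p '' {g | Elig M g ∧ g ≠ χ₁ (cV g)}) :=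
    ⟨hpds1, fun D'' hD'' => le_trans (le_trans hcard1 hcard) (hDmin D'' hD'')⟩
  have hmin2 : IsMinPairedDomSet G (edgeVerts M ∪ p '' {g | Elig M g ∧ g ≠ χ₂ (cV g)}) :=
    ⟨hpds2, fun D'' hD'' => le_trans (le_trans hcard2 hcard) (hDmin D'' hD'')⟩
  have hD1 := hDuniq _ hmin1
  have hD2 := hDuniq _ hmin2
  -- p f belongs to the first set but not the second
  have heligf : Elig M f := ⟨hfM, v, hShv, hvf⟩
  have hcvf : v = cV f := shared_eq_cV hGD heligf hvf hShv
  have hpf1 : p f ∈ edgeVerts M ∪ p '' {g | Elig M g ∧ g ≠ χ₁ (cV g)} := by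
    refine Or.inr ⟨f, ⟨heligf, ?_⟩, rfl⟩
    rw [← hcvf, hχ₁def, Function.update_self]
    exact hef.symm
  have hpf2 : p f ∉ edgeVerts M ∪ p '' {g | Elig M g ∧ g ≠ χ₂ (cV g)} := by
    rintro (hEV | ⟨g, ⟨heligg, hgne⟩, hpg⟩)
    · exact (hGD f heligf).2.2.2.2 hEV
    · have hgf : g = f := p_inj hp1 hp2 heligg.1 hfM hpg
      subst hgf
      rw [← hcvf, hχ₂def, Function.update_self] at hgne
      exact hgne rfl
  rw [hD1] at hpf1
  rw [hD2] at hpf2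
  exact hpf2 hpf1
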